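/- Set μ = −1 and suppose τ_L² τ_R − τ_L δ_R ≠ 1. Then the point (x^{LRL}, 0), where x^{LRL} = (τ_L τ_R + τ_L − δ_R + 1)/(τ_L² τ_R − τ_L δ_R − 1), is the unique fixed point of the composition f_L ∘ f_R ∘ f_L. Moreover, if τ_L ≠ −1, then x^{LRL} = −1 if and only if δ_R = τ_L τ_R + τ_L/(τ_L + 1). -/

import Mathlib

/-- The left piece of the border-collision normal form with `μ = -1`. -/
def fL (τL : ℝ) (p : ℝ × ℝ) : ℝ × ℝ := (τL * p.1 + p.2 - 1, 0)

/-- The right piece of the border-collision normal form with `μ = -1`. -/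
def fR (τR δR : ℝ) (p : ℝ × ℝ) : ℝ × ℝ := (τR * p.1 + p.2 - 1, -δR * p.1)

/-- with `μ = -1` and `τL² τR - τL δR ≠ 1`, the point `(x^{LRL}, 0)` with
`x^{LRL} = (τL τR + τL - δR + 1)/(τL² τR - τL δR - 1)` is the unique fixed point of
`fL ∘ fR ∘ fL`; moreover if `τL ≠ -1` then `x^{LRL} = -1` iff
`δR = τL τR + τL/(τL + 1)`. -/
theorem stmt_12 (τL τR δR : ℝ) (h : τL ^ 2 * τR - τL * δR ≠ 1) :
    (∀ p : ℝ × ℝ, fL τL (fR τR δR (fL τL p)) = p ↔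
      p = ((τL * τR + τL - δR + 1) / (τL ^ 2 * τR - τL * δR - 1), 0)) ∧
    (τL ≠ -1 →
      ((τL * τR + τL - δR + 1) / (τL ^ 2 * τR - τL * δR - 1) = -1 ↔
        δR = τL * τR + τL / (τL + 1))) := by
  have hD : τL ^ 2 * τR - τL * δR - 1 ≠ 0 := sub_ne_zero.mpr h
  have hD' : τL * (τL * τR - δR) - 1 ≠ 0 := by
    intro hc; apply hD; linear_combination hc
  constructor
  · rintro ⟨x, y⟩
    simp only [fL, fR, Prod.mk.injEq]
    constructor
    · rintro ⟨h1, h2⟩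
      subst h2
      constructor
      · field_simp
        linear_combination h1
      · rfl
    · rintro ⟨h1, h2⟩
      subst h1; subst h2
      constructor
      · field_simp
        ring
      · rfl
  · intro hL
    have hL1 : τL + 1 ≠ 0 := fun hc => hL (by linarith)
    rw [div_eq_iff hD]
    constructor
    · intro h1
      field_simp
      linear_combination -h1
    · intro h1
      field_simp at h1
      linear_combination -h1
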